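/- Let σ : Finset V → ℝ be monotone nondecreasing and submodular with σ(∅) = 0. The exact greedy algorithm (picking the element of maximum true marginal gain at each of C steps) returns a set A_C with σ(A_C) ≥ (1 - 1/e)·max_{|A| ≤ C} σ(A). -/

import Mathlib

open Finset

/-- Telescoping/submodularity bound: the marginal gain of adding a whole set is at
most the sum of individual marginal gains. -/
lemma submod_union_bound {V : Type*} [DecidableEq V]
    (σ : Finset V → ℝ)
    (hsubmod : ∀ A B : Finset V, A ⊆ B → ∀ v ∉ B,
      σ (insert v B) - σ B ≤ σ (insert v A) - σ A) :
    ∀ B A : Finset V, σ (A ∪ B) - σ A ≤ ∑ v ∈ B \ A, (σ (insert v A) - σ A) := by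
  intro B
  induction B using Finset.induction_on with
  | empty => intro A; simp
  | insert b s hb ih =>
    intro A
    by_cases hbA : b ∈ A
    · have h1 : A ∪ insert b s = A ∪ s := by
        rw [Finset.union_insert, Finset.insert_eq_self.2 (Finset.mem_union_left s hbA)]
      have h2 : (insert b s) \ A = s \ A := by
        rw [Finset.insert_sdiff_of_mem _ hbA]
      rw [h1, h2]; exact ih A
    · have hbAs : b ∉ A ∪ s := by
        simp only [Finset.mem_union]; tauto
      have h1 : A ∪ insert b s = insert b (A ∪ s) := by
        simp [Finset.union_insert]
      have h2 : (insert b s) \ A = insert b (s \ A) := by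
        rw [Finset.insert_sdiff_of_notMem _ hbA]
      have hbsA : b ∉ s \ A := by simp [hb]
      rw [h1, h2, Finset.sum_insert hbsA]
      have e1 : σ (insert b (A ∪ s)) - σ (A ∪ s) ≤ σ (insert b A) - σ A :=
        hsubmod A (A ∪ s) Finset.subset_union_left b hbAs
      have e2 : σ (A ∪ s) - σ A ≤ ∑ v ∈ s \ A, (σ (insert v A) - σ A) := ih A
      linarith

theorem greedy_submodular_maximization
    {V : Type*} [Fintype V] [DecidableEq V] [Nonempty V]
    (σ : Finset V → ℝ) (C : ℕ) (hC : 1 ≤ C)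
    (hmono : ∀ A B : Finset V, A ⊆ B → σ A ≤ σ B)
    (hsubmod : ∀ A B : Finset V, A ⊆ B → ∀ v ∉ B,
      σ (insert v B) - σ B ≤ σ (insert v A) - σ A)
    (hzero : σ ∅ = 0)
    (A : ℕ → Finset V) (hA0 : A 0 = ∅)
    (hgreedy : ∀ k < C, ∃ i ∉ A k,
      A (k + 1) = insert i (A k) ∧
      ∀ j : V, σ (insert j (A k)) ≤ σ (insert i (A k))) :
    ∀ B : Finset V, B.card ≤ C →
      σ (A C) ≥ (1 - 1 / Real.exp 1) * σ B := by
  intro B hB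
  set Cr : ℝ := (C : ℝ) with hCr
  have hCpos : (0:ℝ) < Cr := by
    rw [hCr]; exact_mod_cast Nat.lt_of_lt_of_le Nat.zero_lt_one hC
  have hCr1 : (1:ℝ) ≤ Cr := by rw [hCr]; exact_mod_cast hC
  have hq0 : (0:ℝ) ≤ 1 - 1/Cr := by
    have : 1/Cr ≤ 1 := by
      rw [div_le_one hCpos]; exact hCr1
    linarith
  have hσB0 : (0:ℝ) ≤ σ B := hzero ▸ hmono ∅ B (Finset.empty_subset B)
  -- one-step contraction
  have step : ∀ k < C, σ B - σ (A (k+1)) ≤ (1 - 1/Cr) * (σ B - σ (A k)) := by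
    intro k hk
    obtain ⟨i, hi, hA1, hmax⟩ := hgreedy k hk
    set g : ℝ := σ (A (k+1)) - σ (A k) with hg
    have hg0 : 0 ≤ g := by
      have := hmono (A k) (A (k+1)) (hA1 ▸ Finset.subset_insert i (A k))
      linarith
    have hsum : σ (A k ∪ B) - σ (A k) ≤ ∑ v ∈ B \ A k, (σ (insert v (A k)) - σ (A k)) :=
      submod_union_bound σ hsubmod B (A k)
    have hterm : ∀ v ∈ B \ A k, σ (insert v (A k)) - σ (A k) ≤ g := by
      intro v _
      have h := hmax v
      have hgeq : g = σ (insert i (A k)) - σ (A k) := by rw [hg, hA1]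
      linarith
    have hsum2 : ∑ v ∈ B \ A k, (σ (insert v (A k)) - σ (A k)) ≤ (B \ A k).card * g := by
      calc ∑ v ∈ B \ A k, (σ (insert v (A k)) - σ (A k)) ≤ ∑ _v ∈ B \ A k, g :=
            Finset.sum_le_sum hterm
        _ = (B \ A k).card * g := by rw [Finset.sum_const, nsmul_eq_mul]
    have hcard : ((B \ A k).card : ℝ) ≤ Cr := by
      have h1 : (B \ A k).card ≤ B.card := Finset.card_le_card (Finset.sdiff_subset)
      rw [hCr]; exact_mod_cast le_trans h1 hB
    have hBle : σ B ≤ σ (A k ∪ B) := hmono B _ Finset.subset_union_right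
    have hd : σ B - σ (A k) ≤ Cr * g := by
      have : ((B \ A k).card : ℝ) * g ≤ Cr * g := mul_le_mul_of_nonneg_right hcard hg0
      linarith
    have hdivg : (σ B - σ (A k)) / Cr ≤ g := by
      rw [div_le_iff₀ hCpos]; linarith
    have hring : (1 - 1/Cr) * (σ B - σ (A k)) = (σ B - σ (A k)) - (σ B - σ (A k)) / Cr := by
      field_simp
    rw [hring]
    linarith
  -- iterate the contraction
  have iter : ∀ k ≤ C, σ B - σ (A k) ≤ (1 - 1/Cr)^k * σ B := by
    intro k hk
    induction k with
    | zero => simp [hA0, hzero]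
    | succ n ih =>
      have hnC : n < C := Nat.lt_of_succ_le hk
      have ihn := ih (Nat.le_of_lt hnC)
      calc σ B - σ (A (n+1)) ≤ (1 - 1/Cr) * (σ B - σ (A n)) := step n hnC
        _ ≤ (1 - 1/Cr) * ((1 - 1/Cr)^n * σ B) := mul_le_mul_of_nonneg_left ihn hq0
        _ = (1 - 1/Cr)^(n+1) * σ B := by ring
  have hfin := iter C le_rfl
  -- (1 - 1/C)^C ≤ exp(-1)
  have hexp : (1 - 1/Cr)^C ≤ Real.exp (-1) := by
    have h1 : 1 - 1/Cr ≤ Real.exp (-(1/Cr)) := by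
      have := Real.add_one_le_exp (-(1/Cr))
      linarith
    have h2 : (1 - 1/Cr)^C ≤ (Real.exp (-(1/Cr)))^C := pow_le_pow_left₀ hq0 h1 C
    have h3 : (Real.exp (-(1/Cr)))^C = Real.exp ((C:ℝ) * -(1/Cr)) :=
      (Real.exp_nat_mul _ C).symm
    have h4 : (C:ℝ) * -(1/Cr) = -1 := by
      field_simp
      rw [hCr]
    rw [h3, h4] at h2
    exact h2
  have hmul : (1 - 1/Cr)^C * σ B ≤ Real.exp (-1) * σ B :=
    mul_le_mul_of_nonneg_right hexp hσB0
  have hexpneg : Real.exp (-1) = 1 / Real.exp 1 := by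
    rw [Real.exp_neg, one_div]
  rw [hexpneg] at hmul
  have : σ B - σ (A C) ≤ (1 / Real.exp 1) * σ B := le_trans hfin hmul
  have hring2 : (1 - 1 / Real.exp 1) * σ B = σ B - (1 / Real.exp 1) * σ B := by ring
  rw [ge_iff_le, hring2]
  linarith
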